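/- Let ω be a primitive third root of unity and a_n = sum over p+q+r=n of ω^(p-q) * (n!/(p!q!r!))^2. Then every a_n is an integer (lies in the image of ℤ in ℂ). -/

import Mathlib

open Finset

private def aa (p q r : ℕ) : ℤ :=
  if (p + 2*q) % 3 = 0 then (Nat.multinomial Finset.univ ![p,q,r] : ℤ)^2
  else if (p + 2*q) % 3 = 2 then -((Nat.multinomial Finset.univ ![p,q,r] : ℤ)^2) else 0

private def bb (p q r : ℕ) : ℤ :=
  if (p + 2*q) % 3 = 1 then (Nat.multinomial Finset.univ ![p,q,r] : ℤ)^2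
  else if (p + 2*q) % 3 = 2 then -((Nat.multinomial Finset.univ ![p,q,r] : ℤ)^2) else 0

private lemma multinomial_swap (p q r : ℕ) :
    Nat.multinomial Finset.univ ![p, q, r] = Nat.multinomial Finset.univ ![q, p, r] := by
  rw [Nat.multinomial, Nat.multinomial, Fin.sum_univ_three, Fin.sum_univ_three,
    Fin.prod_univ_three, Fin.prod_univ_three]
  simp only [Matrix.cons_val_zero, Matrix.cons_val_one, Matrix.head_cons,
    Matrix.cons_val_two, Matrix.tail_cons]
  congr 1
  · rw [show p + q + r = q + p + r by omega]
  · ring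

private lemma bb_antisymm (p q r : ℕ) : bb p q r + bb q p r = 0 := by
  have hsw := multinomial_swap p q r
  unfold bb
  have h : (p+2*q)%3 = 0 ∧ (q+2*p)%3 = 0 ∨ (p+2*q)%3 = 1 ∧ (q+2*p)%3 = 2 ∨
      (p+2*q)%3 = 2 ∧ (q+2*p)%3 = 1 := by omega
  rcases h with ⟨h1,h2⟩|⟨h1,h2⟩|⟨h1,h2⟩ <;> simp [h1, h2, hsw]

private lemma term_decomp (ω : ℂ) (h3 : ω ^ 3 = 1) (h : ω^2 + ω + 1 = 0) (p q r : ℕ) :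
    ω ^ p * (ω^2) ^ q * ((Nat.multinomial Finset.univ ![p,q,r] : ℂ))^2
      = (aa p q r : ℂ) + (bb p q r : ℂ) * ω := by
  have hpow : ω ^ p * (ω^2)^q = ω ^ ((p + 2*q) % 3) := by
    rw [← pow_mul, ← pow_add]
    conv_lhs => rw [show p + 2*q = 3 * ((p+2*q)/3) + (p+2*q)%3 by omega]
    rw [pow_add, pow_mul, h3, one_pow, one_mul]
  rw [hpow]
  unfold aa bb
  have hm : (p+2*q)%3 = 0 ∨ (p+2*q)%3 = 1 ∨ (p+2*q)%3 = 2 := by omega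
  rcases hm with hm|hm|hm <;> rw [hm] <;> simp
  · ring
  · linear_combination ((Nat.multinomial Finset.univ ![p,q,r] : ℂ))^2 * h

theorem omega_integrality (ω : ℂ) (hω3 : ω ^ 3 = 1) (hω1 : ω ≠ 1) (f : ℕ → ℂ)
    (hf : ∀ n : ℕ, f n = ∑ x ∈ Finset.HasAntidiagonal.antidiagonal n, ∑ y ∈ Finset.HasAntidiagonal.antidiagonal x.2,
      ω ^ x.1 * (ω ^ 2) ^ y.1 *
        ((Nat.multinomial Finset.univ ![x.1, y.1, y.2] : ℂ)) ^ 2) :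
    ∀ n : ℕ, ∃ k : ℤ, f n = (k : ℂ) := by
  have hquad : ω ^ 2 + ω + 1 = 0 := by
    have h0 : (ω - 1) * (ω ^ 2 + ω + 1) = 0 := by linear_combination hω3
    rcases mul_eq_zero.mp h0 with h | h
    · exact absurd (sub_eq_zero.mp h) hω1
    · exact h
  intro n
  refine ⟨∑ i ∈ Finset.range (n+1), ∑ j ∈ Finset.range (n - i + 1), aa i j (n - i - j), ?_⟩
  rw [hf n, Finset.Nat.sum_antidiagonal_eq_sum_range_succ_mk]
  have step1 : ∀ i ∈ Finset.range (n+1),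
      (∑ y ∈ Finset.HasAntidiagonal.antidiagonal (n - i), ω ^ i * (ω ^ 2) ^ y.1 *
        ((Nat.multinomial Finset.univ ![i, y.1, y.2] : ℂ)) ^ 2)
      = ∑ j ∈ Finset.range (n - i + 1),
          ((aa i j (n - i - j) : ℂ) + (bb i j (n - i - j) : ℂ) * ω) := by
    intro i _
    rw [Finset.Nat.sum_antidiagonal_eq_sum_range_succ_mk]
    exact Finset.sum_congr rfl fun j _ => term_decomp ω hω3 hquad i j (n - i - j)
  rw [Finset.sum_congr rfl step1]
  have hB : (∑ i ∈ Finset.range (n+1), ∑ j ∈ Finset.range (n - i + 1),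
      bb i j (n - i - j)) = 0 := by
    rw [Finset.sum_sigma']
    refine Finset.sum_involution (fun x _ => ⟨x.2, x.1⟩) ?_ ?_ ?_ ?_
    · intro a ha
      simp only
      have : n - a.2 - a.1 = n - a.1 - a.2 := by omega
      rw [this]
      exact bb_antisymm a.1 a.2 (n - a.1 - a.2)
    · intro a ha hne
      intro heq
      apply hne
      have h1 : a.2 = a.1 := congrArg Sigma.fst heq
      have hmod : (a.1 + 2 * a.2) % 3 = 0 := by omega
      simp [bb, hmod]
    · intro a ha
      simp only [Finset.mem_sigma, Finset.mem_range] at ha ⊢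
      omega
    · intro a ha
      rfl
  have h1 : ∑ i ∈ Finset.range (n+1), ∑ j ∈ Finset.range (n-i+1),
      ((bb i j (n-i-j) : ℂ)) = 0 := by exact_mod_cast hB
  simp only [Finset.sum_add_distrib, ← Finset.sum_mul, h1, zero_mul, add_zero]
  norm_cast
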